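/- (Bounded influence for the total Bregman divergence when f' is bounded; bounded direction of the total-Bregman robustness theorem.) Let E be a real inner product space, φ: E → ℝ differentiable and strictly convex, c > 0, θ ∈ E, and tBD(x, θ) = d_φ(θ, x)/√(1 + c²‖∇φ(x)‖²) where d_φ(θ, x) = φ(θ) − φ(x) − ⟨θ − x, ∇φ(x)⟩. Let f: [0, ∞) → ℝ be differentiable and monotone nondecreasing with f'(z) ≤ M for all z ≥ 0 (e.g. f concave or linear, so that f' is nonincreasing and M = f'(0)). Then for every x ∈ E: f'(tBD(x, θ)) · ‖∇φ(x) − ∇φ(θ)‖ / √(1 + c²‖∇φ(x)‖²) ≤ M (1/c + ‖∇φ(θ)‖), i.e. the influence function is bounded uniformly in the outlier x. -/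

import Mathlib

open scoped RealInnerProductSpace

/-- The total Bregman divergence
`tBD(x, θ) = (φ(θ) − φ(x) − ⟨θ − x, ∇φ(x)⟩)/√(1 + c²‖∇φ(x)‖²)`. -/
noncomputable def tBD {E : Type*} [NormedAddCommGroup E] [InnerProductSpace ℝ E]
    [CompleteSpace E] (φ : E → ℝ) (c : ℝ) (x θ : E) : ℝ :=
  (φ θ - φ x - ⟪θ - x, gradient φ x⟫) / Real.sqrt (1 + c ^ 2 * ‖gradient φ x‖ ^ 2)

/-- Derivative within `Ici 0` of a function monotone on `Ici 0` is nonnegative. -/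
lemma derivWithin_nonneg_of_monotoneOn {f : ℝ → ℝ}
    (hmono : MonotoneOn f (Set.Ici 0)) {t : ℝ} (ht : 0 ≤ t)
    (hd : DifferentiableWithinAt ℝ f (Set.Ici 0) t) :
    0 ≤ derivWithin f (Set.Ici 0) t := by
  have h := hd.hasDerivWithinAt
  rw [hasDerivWithinAt_iff_tendsto_slope] at h
  have hsub : Set.Ioi t ⊆ Set.Ici 0 \ {t} := by
    intro y hy
    exact ⟨le_trans ht (le_of_lt hy), ne_of_gt hy⟩
  have h' : Filter.Tendsto (slope f t) (nhdsWithin t (Set.Ioi t))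
      (nhds (derivWithin f (Set.Ici 0) t)) :=
    h.mono_left (nhdsWithin_mono t hsub)
  refine ge_of_tendsto h' ?_
  filter_upwards [self_mem_nhdsWithin] with y (hy : t < y)
  have hft : f t ≤ f y := hmono ht (le_trans ht hy.le) hy.le
  have h0 : (0:ℝ) ≤ (f y - f t) / (y - t) :=
    div_nonneg (by linarith) (by linarith)
  simpa [slope_def_field, div_eq_inv_mul] using h0

/-- The Bregman divergence is nonnegative for a convex differentiable function. -/
lemma bregman_nonneg {E : Type*} [NormedAddCommGroup E] [InnerProductSpace ℝ E]
    [CompleteSpace E] {φ : E → ℝ} (hφdiff : Differentiable ℝ φ)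
    (hφconv : ConvexOn ℝ Set.univ φ) (x θ : E) :
    0 ≤ φ θ - φ x - ⟪θ - x, gradient φ x⟫ := by
  set g : ℝ → ℝ := fun t => φ (x + t • (θ - x)) with hg
  have hgconv : ConvexOn ℝ Set.univ g := by
    have h1 := hφconv.comp_affineMap (AffineMap.lineMap x θ : ℝ →ᵃ[ℝ] E)
    have heq : g = φ ∘ (AffineMap.lineMap x θ : ℝ →ᵃ[ℝ] E) := by
      funext t
      simp [hg, AffineMap.lineMap_apply, add_comm, vsub_eq_sub, vadd_eq_add]
    rw [heq]
    simpa using h1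
  have hline : HasDerivAt (fun t : ℝ => x + t • (θ - x)) (θ - x) 0 := by
    simpa using ((hasDerivAt_id (0:ℝ)).smul_const (θ - x)).const_add x
  have hF : HasFDerivAt φ (InnerProductSpace.toDual ℝ E (gradient φ x)) x := by
    have := (hφdiff x).hasGradientAt
    rwa [hasGradientAt_iff_hasFDerivAt] at this
  have hF' : HasFDerivAt φ (InnerProductSpace.toDual ℝ E (gradient φ x))
      ((fun t : ℝ => x + t • (θ - x)) 0) := by simpa using hF
  have hgd : HasDerivAt g ⟪gradient φ x, θ - x⟫ 0 := by
    have h2 := hF'.comp_hasDerivAt (0:ℝ) hline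
    simpa [hg, InnerProductSpace.toDual_apply_apply, Function.comp_def] using h2
  have hslope := hgconv.le_slope_of_hasDerivAt (Set.mem_univ (0:ℝ))
    (Set.mem_univ (1:ℝ)) one_pos hgd
  have hs : slope g 0 1 = g 1 - g 0 := by simp [slope_def_field]
  have hg0 : g 0 = φ x := by simp [hg]
  have hg1 : g 1 = φ θ := by simp [hg]
  rw [hs, hg0, hg1] at hslope
  have hcomm : ⟪gradient φ x, θ - x⟫ = ⟪θ - x, gradient φ x⟫ := real_inner_comm _ _
  linarith [hslope, hcomm.le, hcomm.ge]

/-- Bounded influence for the total Bregman divergence when `f'` is bounded: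
if `f` is nondecreasing and `f' ≤ M` on `[0, ∞)`, then
`f'(tBD(x, θ)) ‖∇φ(x) − ∇φ(θ)‖/√(1 + c²‖∇φ(x)‖²) ≤ M(1/c + ‖∇φ(θ)‖)`
uniformly in the outlier `x`. -/
theorem total_bregman_influence_bounded_of_deriv_bounded
    {E : Type*} [NormedAddCommGroup E] [InnerProductSpace ℝ E] [CompleteSpace E]
    (φ : E → ℝ) (hφdiff : Differentiable ℝ φ)
    (hφconv : StrictConvexOn ℝ Set.univ φ)
    (c : ℝ) (hc : 0 < c) (θ : E)
    (f : ℝ → ℝ) (hfdiff : DifferentiableOn ℝ f (Set.Ici 0))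
    (hfmono : MonotoneOn f (Set.Ici 0))
    (M : ℝ) (hM : ∀ z : ℝ, 0 ≤ z → derivWithin f (Set.Ici 0) z ≤ M) :
    ∀ x : E,
      derivWithin f (Set.Ici 0) (tBD φ c x θ) *
          (‖gradient φ x - gradient φ θ‖ /
            Real.sqrt (1 + c ^ 2 * ‖gradient φ x‖ ^ 2))
        ≤ M * (1 / c + ‖gradient φ θ‖) := by
  intro x
  set a := gradient φ x
  set b := gradient φ θ
  set s := Real.sqrt (1 + c ^ 2 * ‖a‖ ^ 2) with hsdef
  have hs1 : (1:ℝ) ≤ s := by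
    have h3 := Real.sqrt_le_sqrt
      (show (1:ℝ) ≤ 1 + c ^ 2 * ‖a‖ ^ 2 from le_add_of_nonneg_right (by positivity))
    rw [hsdef]
    simpa using h3
  have hspos : (0:ℝ) < s := lt_of_lt_of_le one_pos hs1
  have htBD : 0 ≤ tBD φ c x θ := by
    have hnum := bregman_nonneg hφdiff hφconv.convexOn x θ
    exact div_nonneg hnum (le_of_lt hspos)
  have hd0 : 0 ≤ derivWithin f (Set.Ici 0) (tBD φ c x θ) :=
    derivWithin_nonneg_of_monotoneOn hfmono htBD (hfdiff _ htBD)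
  have hdM : derivWithin f (Set.Ici 0) (tBD φ c x θ) ≤ M := hM _ htBD
  have hca : c * ‖a‖ ≤ s := by
    rw [hsdef, show c * ‖a‖ = Real.sqrt ((c * ‖a‖) ^ 2) by
      rw [Real.sqrt_sq (by positivity)]]
    apply Real.sqrt_le_sqrt
    nlinarith [norm_nonneg a]
  have hA : ‖a‖ / s ≤ 1 / c := by
    rw [div_le_div_iff₀ hspos hc, one_mul, mul_comm]
    exact hca
  have hB : ‖b‖ / s ≤ ‖b‖ := by
    rw [div_le_iff₀ hspos]
    nlinarith [norm_nonneg b]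
  have hdir : ‖a - b‖ / s ≤ 1 / c + ‖b‖ := by
    calc ‖a - b‖ / s ≤ (‖a‖ + ‖b‖) / s :=
          by gcongr; exact norm_sub_le a b
      _ = ‖a‖ / s + ‖b‖ / s := add_div _ _ _
      _ ≤ 1 / c + ‖b‖ := add_le_add hA hB
  have hdirnn : 0 ≤ ‖a - b‖ / s := div_nonneg (norm_nonneg _) (le_of_lt hspos)
  exact mul_le_mul hdM hdir hdirnn (le_trans hd0 hdM)
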